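/- Let X ⊆ ℝ^m be nonempty closed convex and x : [0,∞) → ℝ^m be a solution of the ODE x'(t) = k(P_X(x(t)) - x(t)) with k > 0. Then V(t) = ½‖x(t) - P_X(x(t))‖² satisfies V'(t) = -2k V(t), hence dist(x(t), X) = dist(x(0), X) e^{-kt} → 0 exponentially. -/
import Mathlib

open Filter Topology RealInnerProductSpace

set_option maxHeartbeats 1000000

/-- For a solution of `x' = k(P_X(x) - x)` with `k > 0`, the function
`V(t) = ½‖x(t) - P_X(x(t))‖²` satisfies `V' = -2kV`, so the distance to `X`
decays exponentially: `‖x(t) - P_X(x(t))‖ = ‖x(0) - P_X(x(0))‖·e^{-kt}`. -/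
theorem single_agent_exponential_decay {m : ℕ}
    (X : Set (EuclideanSpace ℝ (Fin m)))
    (hne : X.Nonempty) (hcl : IsClosed X) (hconv : Convex ℝ X)
    (P : EuclideanSpace ℝ (Fin m) → EuclideanSpace ℝ (Fin m))
    (hP : ∀ v, P v ∈ X ∧ ∀ y ∈ X, ‖v - P v‖ ≤ ‖v - y‖)
    (k : ℝ) (hk : 0 < k) (x : ℝ → EuclideanSpace ℝ (Fin m))
    (hx : ∀ t, HasDerivAt x (k • (P (x t) - x t)) t) :
    (∀ t : ℝ, 0 ≤ t →
        HasDerivAt (fun s => (1 / 2 : ℝ) * ‖x s - P (x s)‖ ^ 2)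
          (-2 * k * ((1 / 2 : ℝ) * ‖x t - P (x t)‖ ^ 2)) t) ∧
      ∀ t : ℝ, 0 ≤ t →
        ‖x t - P (x t)‖ = ‖x 0 - P (x 0)‖ * Real.exp (-k * t) := by
  -- variational inequality for the projection
  have hvar : ∀ v, ∀ y ∈ X, ⟪v - P v, y - P v⟫ ≤ 0 := by
    intro v y hy
    have hinf : ‖v - P v‖ = ⨅ w : X, ‖v - (w : EuclideanSpace ℝ (Fin m))‖ := by
      haveI : Nonempty X := hne.to_subtype
      refine le_antisymm (le_ciInf fun w => (hP v).2 w w.2) ?_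
      exact ciInf_le ⟨0, fun r ⟨w, h⟩ => h ▸ norm_nonneg _⟩ (⟨P v, (hP v).1⟩ : X)
    exact (norm_eq_iInf_iff_real_inner_le_zero hconv (hP v).1).mp hinf y hy
  -- nonexpansiveness
  have hnonexp : ∀ u v, ‖P u - P v‖ ≤ ‖u - v‖ := by
    intro u v
    have h1 := hvar u (P v) (hP v).1
    have h2 := hvar v (P u) (hP u).1
    have key : ‖P u - P v‖ ^ 2 ≤ ⟪u - v, P u - P v⟫ := by
      have hsum := add_nonpos h1 h2
      have heq : ⟪u - P u, P v - P u⟫ + ⟪v - P v, P u - P v⟫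
          = -⟪u - v, P u - P v⟫ + ‖P u - P v‖ ^ 2 := by
        have e : ⟪v - P v, P u - P v⟫ = -⟪v - P v, P v - P u⟫ := by
          rw [show P u - P v = -(P v - P u) by abel, inner_neg_right]
        rw [e, ← sub_eq_add_neg, ← inner_sub_left,
          show (u - P u) - (v - P v) = (u - v) - (P u - P v) by abel,
          inner_sub_left, show P v - P u = -(P u - P v) by abel, inner_neg_right,
          inner_neg_right, real_inner_self_eq_norm_sq]
        ring
      linarith [hsum, heq.symm.trans_le hsum]
    nlinarith [real_inner_le_norm (u - v) (P u - P v), key, norm_nonneg (P u - P v),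
      norm_nonneg (u - v), sq_abs (‖P u - P v‖)]
  -- derivative of v ↦ ½‖v - P v‖²
  have hf : ∀ v : EuclideanSpace ℝ (Fin m),
      HasFDerivAt (fun w => (1 / 2 : ℝ) * ‖w - P w‖ ^ 2)
        (innerSL ℝ (v - P v)) v := by
    intro v
    rw [hasFDerivAt_iff_isLittleO_nhds_zero]
    have hbound : ∀ h : EuclideanSpace ℝ (Fin m),
        |(1 / 2 : ℝ) * ‖v + h - P (v + h)‖ ^ 2 - (1 / 2) * ‖v - P v‖ ^ 2
          - ⟪v - P v, h⟫| ≤ (5 / 2) * ‖h‖ ^ 2 := by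
      intro h
      have hub : (1 / 2 : ℝ) * ‖v + h - P (v + h)‖ ^ 2
          ≤ (1 / 2) * ‖v - P v‖ ^ 2 + ⟪v - P v, h⟫ + (1 / 2) * ‖h‖ ^ 2 := by
        have h1 : ‖v + h - P (v + h)‖ ≤ ‖v + h - P v‖ := (hP (v + h)).2 _ (hP v).1
        have h2 : ‖v + h - P v‖ ^ 2 = ‖v - P v‖ ^ 2 + 2 * ⟪v - P v, h⟫ + ‖h‖ ^ 2 := by
          have e : v + h - P v = (v - P v) + h := by abel
          rw [e, norm_add_sq_real]
        nlinarith [sq_nonneg (‖v + h - P (v + h)‖), norm_nonneg (v + h - P (v + h)),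
          norm_nonneg (v + h - P v), sq_le_sq' (by linarith [norm_nonneg (v + h - P (v+h))]) h1]
      have hlb : (1 / 2 : ℝ) * ‖v - P v‖ ^ 2
          ≤ (1 / 2) * ‖v + h - P (v + h)‖ ^ 2 - ⟪v - P v, h⟫ + (5 / 2) * ‖h‖ ^ 2 := by
        set w := v + h - P (v + h) with hw
        have h1 : ‖v - P v‖ ≤ ‖v - P (v + h)‖ := (hP v).2 _ (hP (v + h)).1
        have h2 : ‖v - P (v + h)‖ ^ 2 = ‖w‖ ^ 2 - 2 * ⟪w, h⟫ + ‖h‖ ^ 2 := by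
          have e : v - P (v + h) = w - h := by rw [hw]; abel
          rw [e, norm_sub_sq_real]
        have h3 : ⟪w - (v - P v), h⟫ = ⟪w, h⟫ - ⟪v - P v, h⟫ := inner_sub_left _ _ _
        have h4 : ‖w - (v - P v)‖ ≤ 2 * ‖h‖ := by
          have : w - (v - P v) = h - (P (v + h) - P v) := by rw [hw]; abel
          rw [this]
          calc ‖h - (P (v + h) - P v)‖ ≤ ‖h‖ + ‖P (v + h) - P v‖ := norm_sub_le _ _
            _ ≤ ‖h‖ + ‖v + h - v‖ := by linarith [hnonexp (v + h) v]
            _ = 2 * ‖h‖ := by rw [show v + h - v = h by abel]; ring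
        have h5 : |⟪w - (v - P v), h⟫| ≤ 2 * ‖h‖ ^ 2 := by
          calc |⟪w - (v - P v), h⟫| ≤ ‖w - (v - P v)‖ * ‖h‖ := abs_real_inner_le_norm _ _
            _ ≤ 2 * ‖h‖ * ‖h‖ := by
                exact mul_le_mul_of_nonneg_right h4 (norm_nonneg h)
            _ = 2 * ‖h‖ ^ 2 := by ring
        have h6 : ‖v - P v‖ ^ 2 ≤ ‖v - P (v + h)‖ ^ 2 :=
          sq_le_sq' (by linarith [norm_nonneg (v - P v)]) h1
        have := abs_le.mp h5
        nlinarith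
      rw [abs_le]; constructor <;> nlinarith
    have hbig : (fun h : EuclideanSpace ℝ (Fin m) =>
        (1 / 2 : ℝ) * ‖v + h - P (v + h)‖ ^ 2 - (1 / 2) * ‖v - P v‖ ^ 2
          - (innerSL ℝ (v - P v)) h) =O[𝓝 0] fun h => ‖h‖ ^ 2 := by
      refine Asymptotics.isBigO_iff.mpr ⟨5 / 2, Filter.Eventually.of_forall fun h => ?_⟩
      have hb := hbound h
      simp only [innerSL_apply_apply, Real.norm_eq_abs, abs_of_nonneg (sq_nonneg (‖h‖ : ℝ))]
      exact hb
    refine hbig.trans_isLittleO ?_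
    rw [Asymptotics.isLittleO_iff]
    intro c hc
    filter_upwards [tendsto_norm_zero (Metric.ball_mem_nhds (0 : ℝ) hc)] with h hh
    have hh' : ‖h‖ < c := by simpa [abs_of_nonneg (norm_nonneg h)] using hh
    have : ‖h‖ ^ 2 ≤ c * ‖h‖ := by nlinarith [norm_nonneg h]
    simpa [abs_of_nonneg (sq_nonneg (‖h‖ : ℝ))] using this
  -- derivative of V along the trajectory
  set V : ℝ → ℝ := fun s => (1 / 2 : ℝ) * ‖x s - P (x s)‖ ^ 2 with hVdef
  have hV : ∀ t : ℝ, HasDerivAt V (-2 * k * V t) t := by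
    intro t
    have := (hf (x t)).comp_hasDerivAt t (hx t)
    have heq : (innerSL ℝ (x t - P (x t))) (k • (P (x t) - x t)) = -2 * k * V t := by
      simp only [innerSL_apply_apply, inner_smul_right, hVdef]
      rw [show P (x t) - x t = -(x t - P (x t)) by abel, inner_neg_right,
        real_inner_self_eq_norm_sq]
      ring
    rw [heq] at this
    exact this
  refine ⟨fun t _ => hV t, ?_⟩
  -- solve the ODE: V t = V 0 * exp(-2kt)
  have hVconst : ∀ t : ℝ, V t = V 0 * Real.exp (-2 * k * t) := by
    intro t
    set g : ℝ → ℝ := fun s => V s * Real.exp (2 * k * s) with hg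
    have hg' : ∀ s, HasDerivAt g 0 s := by
      intro s
      have he : HasDerivAt (fun u : ℝ => Real.exp (2 * k * u))
          (Real.exp (2 * k * s) * (2 * k * 1)) s :=
        ((hasDerivAt_id s).const_mul (2 * k)).exp
      have hgs := (hV s).mul he
      have e0 : -2 * k * V s * Real.exp (2 * k * s)
          + V s * (Real.exp (2 * k * s) * (2 * k * 1)) = 0 := by ring
      exact e0 ▸ hgs
    have hconst : g t = g 0 :=
      is_const_of_deriv_eq_zero (fun s => (hg' s).differentiableAt)
        (fun s => (hg' s).deriv) t 0
    have h0 : g 0 = V 0 := by simp [hg]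
    have hVt : V t * Real.exp (2 * k * t) = V 0 := by rw [← h0, ← hconst]
    rw [show (-2 : ℝ) * k * t = -(2 * k * t) by ring, Real.exp_neg]
    field_simp
    linarith [hVt]
  intro t _
  have h1 : (0 : ℝ) ≤ ‖x t - P (x t)‖ := norm_nonneg _
  have h2 : (0 : ℝ) ≤ ‖x 0 - P (x 0)‖ * Real.exp (-k * t) :=
    mul_nonneg (norm_nonneg _) (Real.exp_pos _).le
  have hsq : ‖x t - P (x t)‖ ^ 2 = (‖x 0 - P (x 0)‖ * Real.exp (-k * t)) ^ 2 := by
    have h := hVconst t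
    simp only [hVdef] at h
    have he2 : Real.exp (-k * t) ^ 2 = Real.exp (-2 * k * t) := by
      rw [sq, ← Real.exp_add]; ring_nf
    rw [mul_pow, he2]
    nlinarith [h]
  calc ‖x t - P (x t)‖ = Real.sqrt (‖x t - P (x t)‖ ^ 2) := (Real.sqrt_sq h1).symm
    _ = Real.sqrt ((‖x 0 - P (x 0)‖ * Real.exp (-k * t)) ^ 2) := by rw [hsq]
    _ = _ := Real.sqrt_sq h2
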